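/- The level-2 signature matrix σ^(2)(Mom^M) of the moment curve Mom^M(t) = (t, t², ..., t^M), whose (i,j)-entry equals j/(i+j), is invertible for every M ≥ 1. -/

import Mathlib

open Polynomial intervalIntegral Matrix

lemma quadform_integral (M : ℕ) (x : Fin M → ℝ) :
    ∫ t in (0:ℝ)..1, t * ((∑ i : Fin M, Polynomial.C (x i) * Polynomial.X ^ (i:ℕ)).eval t)^2
      = ∑ i : Fin M, ∑ j : Fin M, x i * x j * (1 / ((i:ℕ) + (j:ℕ) + 2)) := by
  have h : ∀ t : ℝ, t * ((∑ i : Fin M, Polynomial.C (x i) * Polynomial.X ^ (i:ℕ)).eval t)^2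
      = ∑ i : Fin M, ∑ j : Fin M, (x i * x j) * t ^ ((i:ℕ) + (j:ℕ) + 1) := by
    intro t
    rw [Polynomial.eval_finset_sum]
    simp only [Polynomial.eval_mul, Polynomial.eval_C, Polynomial.eval_pow, Polynomial.eval_X]
    rw [sq, Finset.sum_mul_sum, Finset.mul_sum]
    refine Finset.sum_congr rfl fun i _ => ?_
    rw [Finset.mul_sum]
    refine Finset.sum_congr rfl fun j _ => ?_
    ring
  simp_rw [h]
  rw [intervalIntegral.integral_finset_sum (fun i _ =>
      (Continuous.intervalIntegrable (by fun_prop) 0 1))]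
  refine Finset.sum_congr rfl fun i _ => ?_
  rw [intervalIntegral.integral_finset_sum (fun j _ =>
      (Continuous.intervalIntegrable (by fun_prop) 0 1))]
  refine Finset.sum_congr rfl fun j _ => ?_
  rw [intervalIntegral.integral_const_mul, integral_pow]
  push_cast
  ring_nf

lemma cauchy_posdef (M : ℕ) :
    (Matrix.of fun i j : Fin M => (1:ℝ) / ((i:ℕ) + (j:ℕ) + 2)).PosDef := by
  rw [Matrix.posDef_iff_dotProduct_mulVec]
  constructor
  · ext i j
    simp only [Matrix.conjTranspose_apply, Matrix.of_apply, star_trivial]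
    ring_nf
  · intro x hx
    set P : Polynomial ℝ := ∑ i : Fin M, Polynomial.C (x i) * Polynomial.X ^ (i:ℕ) with hPdef
    have hP : P ≠ 0 := by
      obtain ⟨i, hi⟩ := Function.ne_iff.mp hx
      intro h
      apply hi
      have : P.coeff (i:ℕ) = x i := by
        rw [hPdef, Polynomial.finset_sum_coeff]
        simp only [Polynomial.coeff_C_mul, Polynomial.coeff_X_pow]
        rw [Finset.sum_eq_single i]
        · simp
        · intro j _ hj
          simp only [Fin.val_eq_val]
          rw [if_neg (fun h' => hj h'.symm), mul_zero]
        · simp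
      rw [h] at this
      simpa using this.symm
    have key : star x ⬝ᵥ (Matrix.of fun i j : Fin M =>
        (1:ℝ) / ((i:ℕ) + (j:ℕ) + 2)).mulVec x
        = ∫ t in (0:ℝ)..1, t * (P.eval t)^2 := by
      rw [quadform_integral M x]
      simp only [dotProduct, Matrix.mulVec, dotProduct, star_trivial,
        Pi.star_apply, Matrix.of_apply, Finset.mul_sum]
      refine Finset.sum_congr rfl fun i _ => Finset.sum_congr rfl fun j _ => ?_
      ring
    rw [key]
    apply intervalIntegral.integral_pos zero_lt_one (by fun_prop)
    · intro t ht
      have := ht.1.le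
      positivity
    · obtain ⟨c, hc⟩ := ((Set.Ioo_infinite zero_lt_one).diff
        (Polynomial.finite_setOf_isRoot hP)).nonempty
      refine ⟨c, ⟨hc.1.1.le, hc.1.2.le⟩, ?_⟩
      have h1 : P.eval c ≠ 0 := hc.2
      have h2 : (0:ℝ) < c := hc.1.1
      positivity

/-- The level-2 signature matrix of the moment curve `Mom^M`, with `(i,j)`-entry `j/(i+j)`
(indices `1 ≤ i, j ≤ M`), is invertible for every `M ≥ 1`. -/
theorem stmt_3 (M : ℕ) (hM : 1 ≤ M) :
    (Matrix.of fun i j : Fin M =>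
      (((j : ℕ) + 1 : ℝ)) / (((i : ℕ) + 1 : ℝ) + ((j : ℕ) + 1 : ℝ))).det ≠ 0 := by
  have hfac : (Matrix.of fun i j : Fin M =>
      (((j : ℕ) + 1 : ℝ)) / (((i : ℕ) + 1 : ℝ) + ((j : ℕ) + 1 : ℝ)))
      = (Matrix.of fun i j : Fin M => (1:ℝ) / ((i:ℕ) + (j:ℕ) + 2)) *
        Matrix.diagonal (fun j : Fin M => ((j:ℕ) + 1 : ℝ)) := by
    ext i j
    rw [Matrix.mul_diagonal]
    simp only [Matrix.of_apply]
    have : ((i:ℕ) + 1 : ℝ) + ((j:ℕ) + 1) ≠ 0 := by positivity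
    field_simp
    ring_nf
  rw [hfac, Matrix.det_mul, Matrix.det_diagonal]
  apply mul_ne_zero (cauchy_posdef M).det_pos.ne'
  apply Finset.prod_ne_zero_iff.mpr
  intro j _
  positivity
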